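/- Let G be the group presented by ⟨a, s, t | a² = 1, [a, t⁻¹at] = 1, [s,t] = 1, s⁻¹as = a·(t⁻¹at)⟩. Then for all integers i, j < 0, the elements s⁻ⁱ a sⁱ and s⁻ʲ a sʲ commute in G; that is, [a^{sⁱ}, a^{sʲ}] = 1 in G for all i, j < 0. -/

import Mathlib

/-- The three generators `a`, `s`, `t`. -/
inductive Gen : Type
  | a | s | t

/-- The relators of the presentation
`⟨a, s, t | a² = 1, [a, t⁻¹at] = 1, [s,t] = 1, s⁻¹as = a·(t⁻¹at)⟩`,
where `[x,y] = x⁻¹y⁻¹xy`. -/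
def rels : Set (FreeGroup Gen) :=
  { (FreeGroup.of Gen.a) ^ 2,
    (FreeGroup.of Gen.a)⁻¹ *
        ((FreeGroup.of Gen.t)⁻¹ * FreeGroup.of Gen.a * FreeGroup.of Gen.t)⁻¹ *
        FreeGroup.of Gen.a *
        ((FreeGroup.of Gen.t)⁻¹ * FreeGroup.of Gen.a * FreeGroup.of Gen.t),
    (FreeGroup.of Gen.s)⁻¹ * (FreeGroup.of Gen.t)⁻¹ * FreeGroup.of Gen.s * FreeGroup.of Gen.t,
    ((FreeGroup.of Gen.s)⁻¹ * FreeGroup.of Gen.a * FreeGroup.of Gen.s)⁻¹ *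
        (FreeGroup.of Gen.a *
          ((FreeGroup.of Gen.t)⁻¹ * FreeGroup.of Gen.a * FreeGroup.of Gen.t)) }

/-- The group `G` of the paper. -/
abbrev G := PresentedGroup rels

def a : G := PresentedGroup.of Gen.a
def s : G := PresentedGroup.of Gen.s
def t : G := PresentedGroup.of Gen.t

private lemma mk_rel {r : FreeGroup Gen} (h : r ∈ rels) :
    (QuotientGroup.mk r : G) = 1 :=
  (QuotientGroup.eq_one_iff r).mpr (Subgroup.subset_normalClosure h)

private lemma mk_of (x : Gen) :
    (QuotientGroup.mk (FreeGroup.of x) : G) = PresentedGroup.of x := rfl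

private lemma ha2 : a * a = 1 := by
  have h := mk_rel (Set.mem_insert _ _)
  rw [QuotientGroup.mk_pow] at h
  rw [a, ← mk_of]
  rw [pow_two] at h
  exact h

private lemma hcomm : a * (t⁻¹ * a * t) = (t⁻¹ * a * t) * a := by
  have h := mk_rel (show _ ∈ rels from Set.mem_insert_of_mem _ (Set.mem_insert _ _))
  simp only [QuotientGroup.mk_mul, QuotientGroup.mk_inv, mk_of] at h
  simp only [show PresentedGroup.of Gen.a = a from rfl, show PresentedGroup.of Gen.s = s from rfl,
    show PresentedGroup.of Gen.t = t from rfl] at h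
  change a⁻¹ * (t⁻¹ * a * t)⁻¹ * a * (t⁻¹ * a * t) = (1 : G) at h
  have h2 := congrArg (fun x => (t⁻¹ * a * t) * a * x) h
  simp only [mul_one] at h2
  group at h2
  group
  exact h2

private lemma hst : s * t = t * s := by
  have h := mk_rel (show _ ∈ rels from
    Set.mem_insert_of_mem _ (Set.mem_insert_of_mem _ (Set.mem_insert _ _)))
  simp only [QuotientGroup.mk_mul, QuotientGroup.mk_inv, mk_of] at h
  simp only [show PresentedGroup.of Gen.a = a from rfl, show PresentedGroup.of Gen.s = s from rfl,
    show PresentedGroup.of Gen.t = t from rfl] at h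
  change s⁻¹ * t⁻¹ * s * t = (1 : G) at h
  have h2 := congrArg (fun x => t * s * x) h
  simp only [mul_one] at h2
  group at h2
  exact h2

private lemma hconj : s⁻¹ * a * s = a * (t⁻¹ * a * t) := by
  have h := mk_rel (show _ ∈ rels from
    Set.mem_insert_of_mem _ (Set.mem_insert_of_mem _ (Set.mem_insert_of_mem _ rfl)))
  simp only [QuotientGroup.mk_mul, QuotientGroup.mk_inv, mk_of] at h
  simp only [show PresentedGroup.of Gen.a = a from rfl, show PresentedGroup.of Gen.s = s from rfl,
    show PresentedGroup.of Gen.t = t from rfl] at h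
  change (s⁻¹ * a * s)⁻¹ * (a * (t⁻¹ * a * t)) = (1 : G) at h
  have h2 := congrArg (fun x => (s⁻¹ * a * s) * x) h
  simp only [mul_one] at h2
  group at h2 ⊢
  exact h2.symm

private lemma st_comm : Commute s t := hst

/-- `b n = s^n a s^{-n}`, i.e. `a^{s^{-n}}`. -/
private def b (n : ℕ) : G := s ^ n * a * (s ^ n)⁻¹

private lemma conj_t (m : ℕ) : (MulAut.conj ((s : G) ^ m)) t = t := by
  rw [MulAut.conj_apply, mul_inv_eq_iff_eq_mul]
  exact (st_comm.pow_left m).eq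

private lemma conj_s (m : ℕ) : (MulAut.conj ((s : G) ^ m)) s = s := by
  rw [MulAut.conj_apply, mul_inv_eq_iff_eq_mul]
  exact ((Commute.refl s).pow_left m).eq

private lemma conj_a (m : ℕ) : (MulAut.conj ((s : G) ^ m)) a = b m := rfl

private lemma hb2 (n : ℕ) : b n * b n = 1 := by
  have h : b n * b n = s ^ n * (a * a) * (s ^ n)⁻¹ := by
    simp only [b]; group
  rw [h, ha2, mul_one, mul_inv_cancel]

private lemma hbt (n : ℕ) : b n = b (n + 1) * (t⁻¹ * b (n + 1) * t) := by
  have h := congrArg (MulAut.conj ((s : G) ^ (n + 1))) hconj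
  simp only [map_mul, map_inv, conj_t, conj_s, conj_a] at h
  have h2 : s⁻¹ * b (n + 1) * s = b n := by
    simp only [b]; group
  rw [h2] at h
  exact h

private lemma hcommT (n : ℕ) : Commute (b n) (t⁻¹ * b n * t) := by
  have h := congrArg (MulAut.conj ((s : G) ^ n)) hcomm
  simp only [map_mul, map_inv, conj_t, conj_a] at h
  exact h

private lemma commute_conj_t {x y : G} (h : Commute x (t⁻¹ * y * t)) :
    Commute (t * x * t⁻¹) y := by
  have h' := h.eq
  show (t * x * t⁻¹) * y = y * (t * x * t⁻¹)
  calc (t * x * t⁻¹) * y = t * (x * (t⁻¹ * y * t)) * t⁻¹ := by group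
    _ = t * ((t⁻¹ * y * t) * x) * t⁻¹ := by rw [h']
    _ = y * (t * x * t⁻¹) := by group

private lemma commute_conj_t' {x y : G} (h : Commute (t * x * t⁻¹) y) :
    Commute x (t⁻¹ * y * t) := by
  have h' := h.eq
  show x * (t⁻¹ * y * t) = (t⁻¹ * y * t) * x
  calc x * (t⁻¹ * y * t) = t⁻¹ * ((t * x * t⁻¹) * y) * t := by group
    _ = t⁻¹ * (y * (t * x * t⁻¹)) * t := by rw [h']
    _ = (t⁻¹ * y * t) * x := by group

private lemma hcommT' (n : ℕ) : Commute (t * b n * t⁻¹) (b n) :=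
  commute_conj_t (hcommT n)

private lemma hB (n : ℕ) : t * b n * t⁻¹ = (t * b (n + 1) * t⁻¹) * b (n + 1) := by
  calc t * b n * t⁻¹ = t * (b (n + 1) * (t⁻¹ * b (n + 1) * t)) * t⁻¹ := by rw [← hbt]
    _ = (t * b (n + 1) * t⁻¹) * b (n + 1) := by group

private lemma main : ∀ d : ℕ,
    (∀ n, Commute (b (n + d)) (b n)) ∧ (∀ n, Commute (t * b (n + d) * t⁻¹) (b n)) := by
  intro d
  induction d with
  | zero => exact ⟨fun n => Commute.refl _, fun n => hcommT' n⟩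
  | succ d ih =>
    obtain ⟨hk, hA⟩ := ih
    have hk' : ∀ n, Commute (b (n + (d + 1))) (b n) := by
      intro n
      have h1 : Commute (b (n + (d + 1))) (b (n + 1)) := by
        have := hk (n + 1)
        rwa [show n + 1 + d = n + (d + 1) from by omega] at this
      have h3 : Commute (t * b (n + (d + 1)) * t⁻¹) (b (n + 1)) := by
        have := hA (n + 1)
        rwa [show n + 1 + d = n + (d + 1) from by omega] at this
      have h2 : Commute (b (n + (d + 1))) (t⁻¹ * b (n + 1) * t) := commute_conj_t' h3
      rw [hbt n]
      exact h1.mul_right h2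
    refine ⟨hk', fun n => ?_⟩
    have hx : t * b (n + (d + 1)) * t⁻¹ = (t * b (n + d) * t⁻¹) * b (n + (d + 1)) := by
      have h := hB (n + d)
      rw [show n + d + 1 = n + (d + 1) from by omega] at h
      rw [h, mul_assoc (t * b (n + (d + 1)) * t⁻¹), hb2, mul_one]
    rw [hx]
    exact Commute.mul_left (hA n) (hk' n)

/-- In `G`, the conjugates `a^{sⁱ} = s⁻ⁱ a sⁱ` and `a^{sʲ} = s⁻ʲ a sʲ` commute for all
integers `i, j < 0`. -/
theorem conj_a_s_commute (i j : ℤ) (hi : i < 0) (hj : j < 0) :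
    Commute ((s ^ i)⁻¹ * a * s ^ i) ((s ^ j)⁻¹ * a * s ^ j) := by
  have key : ∀ m n : ℕ, Commute (b m) (b n) := by
    intro m n
    rcases le_total n m with h | h
    · obtain ⟨d, rfl⟩ := Nat.exists_eq_add_of_le h
      exact (main d).1 n
    · obtain ⟨d, rfl⟩ := Nat.exists_eq_add_of_le h
      exact ((main d).1 m).symm
  have hs : ∀ k : ℤ, k < 0 → (s ^ k)⁻¹ * a * s ^ k = b (-k).toNat := by
    intro k hk
    have hcast : (((-k).toNat : ℤ)) = -k := Int.toNat_of_nonneg (by omega)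
    have h1 : (s : G) ^ ((-k).toNat) = (s ^ k)⁻¹ := by
      rw [← zpow_natCast, hcast, zpow_neg]
    simp only [b, h1, inv_inv]
  rw [hs i hi, hs j hj]
  exact key _ _
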